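/- Let (S⁰ₙ)ₙ, (V⁰ₙ)ₙ be sequences of real random variables on probability spaces (Ω⁰ₙ, P⁰ₙ) and (S¹ₙ)ₙ, (V¹ₙ)ₙ sequences of real random variables on probability spaces (Ω¹ₙ, P¹ₙ). Suppose V⁰ₙ → 0 in probability, V¹ₙ → 0 in probability, and both S⁰ₙ and S¹ₙ converge in distribution to a standard normal random variable as n → ∞. Then for every ε > 0 there exists n₀ such that for all n ≥ n₀ and every threshold τ ∈ ℝ, (P⁰ₙ(S⁰ₙ + V⁰ₙ > τ) + P¹ₙ(S¹ₙ + V¹ₙ ≤ τ))/2 ≥ 1/2 − ε. -/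

import Mathlib

open MeasureTheory ProbabilityTheory Filter

section Helpers

open Set Real OmegaCompletePartialOrder
open scoped NNReal ENNReal

private lemma gaussianPDFReal_le_half (x : ℝ) : gaussianPDFReal 0 1 x ≤ 1/2 := by
  rw [gaussianPDFReal]
  push_cast
  have h1 : Real.exp (- (x - 0)^2 / (2 * 1)) ≤ 1 := by
    rw [Real.exp_le_one_iff]
    nlinarith [sq_nonneg (x - 0)]
  have h2 : (2:ℝ) ≤ Real.sqrt (2 * π * 1) := by
    have hpi : (3:ℝ) < π := Real.pi_gt_three
    apply Real.le_sqrt_of_sq_le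
    nlinarith
  have h3 : (Real.sqrt (2 * π * 1))⁻¹ ≤ 1/2 := by
    rw [inv_le_comm₀ (by linarith) (by norm_num)]
    linarith
  have h4 : (0:ℝ) < Real.exp (- (x - 0)^2 / (2 * 1)) := Real.exp_pos _
  calc (Real.sqrt (2 * π * 1))⁻¹ * Real.exp (- (x - 0)^2 / (2 * 1))
      ≤ (1/2) * 1 := mul_le_mul h3 h1 (le_of_lt h4) (by norm_num)
    _ = 1/2 := by norm_num

private lemma gaussian_Icc_le {a b : ℝ} (hab : a ≤ b) :
    ((gaussianReal 0 1) (Set.Icc a b)).toReal ≤ (b - a) / 2 := by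
  apply ENNReal.toReal_le_of_le_ofReal (by linarith)
  rw [gaussianReal_apply 0 (by norm_num) (Set.Icc a b)]
  calc ∫⁻ x in Set.Icc a b, gaussianPDF 0 1 x
      ≤ ∫⁻ _ in Set.Icc a b, ENNReal.ofReal (1/2) :=
        lintegral_mono fun x => ENNReal.ofReal_le_ofReal (gaussianPDFReal_le_half x)
    _ = ENNReal.ofReal (1/2) * volume (Set.Icc a b) := setLIntegral_const _ _
    _ = ENNReal.ofReal (1/2) * ENNReal.ofReal (b - a) := by rw [Real.volume_Icc]
    _ = ENNReal.ofReal ((b - a) / 2) := by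
        rw [← ENNReal.ofReal_mul (by norm_num)]
        ring_nf

private lemma measure_iSup_apply (μs : ℕ → Measure ℝ) (hmono : Monotone μs)
    {A : Set ℝ} (hA : MeasurableSet A) : (⨆ i, μs i) A = ⨆ i, μs i A := by
  have hinter : ∀ (f : ℕ → Set ℝ), (∀ k, MeasurableSet (f k)) →
      Pairwise (Function.onFun Disjoint f) →
      (⨆ i, μs i (⋃ k, f k)) = ∑' k, ⨆ i, μs i (f k) := by
    intro f hf hd
    have h1 : ∀ i, μs i (⋃ k, f k) = ∑' k, μs i (f k) := fun i => measure_iUnion hd hf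
    simp_rw [h1, ← lintegral_count (α := ℕ)]
    rw [← lintegral_iSup (fun i => Measurable.of_discrete)
      (fun i j hij k => (Measure.le_iff'.mp (hmono hij)) (f k))]
  set m : Measure ℝ := Measure.ofMeasurable (fun s _ => ⨆ i, μs i s)
    (by simp) (fun f hf hd => hinter f hf hd) with hm
  have hm_apply : ∀ {s : Set ℝ}, MeasurableSet s → m s = ⨆ i, μs i s :=
    fun hs => Measure.ofMeasurable_apply _ hs
  apply le_antisymm
  · have hub : (⨆ i, μs i) ≤ m := iSup_le fun i => Measure.le_iff.mpr fun s hs => by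
      rw [hm_apply hs]; exact le_iSup (fun j => μs j s) i
    exact le_trans (Measure.le_iff'.mp hub A) (le_of_eq (hm_apply hA))
  · exact iSup_le fun i => Measure.le_iff'.mp (le_iSup μs i) A

private lemma ev_meas (ν : ℕ → Measure ℝ) (hp : ∀ n, IsProbabilityMeasure (ν n))
    (hν : Tendsto (β := ProbabilityMeasure ℝ) (fun n => (⟨ν n, hp n⟩ : ProbabilityMeasure ℝ)) atTop
      (nhds (⟨gaussianReal 0 1, inferInstance⟩ : ProbabilityMeasure ℝ)))
    {A : Set ℝ} (hA : IsOpen A) {ε : ℝ} (hε : 0 < ε) :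
    ∀ᶠ n in atTop, ((gaussianReal 0 1) A).toReal - ε ≤ (ν n A).toReal := by
  set μ : Measure ℝ := gaussianReal 0 1 with hμ
  have hne : ∀ n (s : Set ℝ), ν n s ≠ ⊤ := fun n s => by
    haveI := hp n; exact measure_ne_top _ _
  by_cases h : (μ A).toReal ≤ ε
  · filter_upwards with n
    have := ENNReal.toReal_nonneg (a := ν n A)
    linarith
  · push_neg at h
    have hmem : ENNReal.ofReal ((μ A).toReal - ε) < μ A := by
      conv_rhs => rw [← ENNReal.ofReal_toReal (measure_ne_top μ A)]
      exact ENNReal.ofReal_lt_ofReal_iff (by linarith) |>.mpr (by linarith)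
    have hlim := ProbabilityMeasure.le_liminf_measure_open_of_tendsto hν hA
    have hev : ∀ᶠ n in atTop, ENNReal.ofReal ((μ A).toReal - ε) < ν n A :=
      eventually_lt_of_lt_liminf (lt_of_lt_of_le hmem hlim)
    filter_upwards [hev] with n hn
    exact (ENNReal.ofReal_le_iff_le_toReal (hne n A)).mp hn.le

private lemma gaussian_tail {ε : ℝ} (hε : 0 < ε) :
    ∃ M : ℝ, 0 < M ∧ ((gaussianReal 0 1) (Set.Ici M)).toReal ≤ ε ∧
      ((gaussianReal 0 1) (Set.Iic (-M))).toReal ≤ ε := by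
  set μ : Measure ℝ := gaussianReal 0 1 with hμ
  have hempty : ⋂ n : ℕ, (Set.Icc (-(n:ℝ)) (n:ℝ))ᶜ = ∅ := by
    ext x
    simp only [Set.mem_iInter, Set.mem_compl_iff, Set.mem_Icc, Set.mem_empty_iff_false,
      iff_false, not_forall, not_not]
    exact ⟨⌈|x|⌉₊, by
      constructor
      · have := Nat.le_ceil |x|
        have := neg_abs_le x
        linarith
      · have := Nat.le_ceil |x|
        have := le_abs_self x
        linarith⟩
  have htend : Tendsto (fun n : ℕ => μ ((Set.Icc (-(n:ℝ)) (n:ℝ))ᶜ)) atTop (nhds 0) := by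
    have := tendsto_measure_iInter_atTop (μ := μ)
      (s := fun n : ℕ => (Set.Icc (-(n:ℝ)) (n:ℝ))ᶜ)
      (fun n => (measurableSet_Icc.compl).nullMeasurableSet)
      (fun n m hnm => Set.compl_subset_compl.mpr
        (Set.Icc_subset_Icc (neg_le_neg (by exact_mod_cast hnm))
          (by exact_mod_cast hnm)))
      ⟨0, measure_ne_top _ _⟩
    rwa [hempty, measure_empty] at this
  have hev := htend.eventually_lt_const
    (show (0:ℝ≥0∞) < ENNReal.ofReal ε by simpa using hε)
  obtain ⟨n, hn⟩ := hev.exists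
  refine ⟨(n:ℝ) + 1, by positivity, ?_, ?_⟩
  · apply ENNReal.toReal_le_of_le_ofReal hε.le
    refine le_trans (measure_mono ?_) hn.le
    intro x hx
    simp only [Set.mem_Ici] at hx
    simp only [Set.mem_compl_iff, Set.mem_Icc, not_and_or, not_le]
    right; linarith
  · apply ENNReal.toReal_le_of_le_ofReal hε.le
    refine le_trans (measure_mono ?_) hn.le
    intro x hx
    simp only [Set.mem_Iic] at hx
    simp only [Set.mem_compl_iff, Set.mem_Icc, not_and_or, not_lt, not_le]
    left; linarith

private lemma unif_Ioi (ν : ℕ → Measure ℝ) (hp : ∀ n, IsProbabilityMeasure (ν n))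
    (hν : Tendsto (β := ProbabilityMeasure ℝ) (fun n => (⟨ν n, hp n⟩ : ProbabilityMeasure ℝ)) atTop
      (nhds (⟨gaussianReal 0 1, inferInstance⟩ : ProbabilityMeasure ℝ)))
    {ε : ℝ} (hε : 0 < ε) :
    ∀ᶠ n in atTop, ∀ t : ℝ,
      ((gaussianReal 0 1) (Set.Ioi t)).toReal - ε ≤ (ν n (Set.Ioi t)).toReal := by
  set μ : Measure ℝ := gaussianReal 0 1 with hμ
  have hne : ∀ n (s : Set ℝ), ν n s ≠ ⊤ := fun n s => by
    haveI := hp n; exact measure_ne_top _ _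
  obtain ⟨M, hM0, hMa, hMb⟩ := gaussian_tail (half_pos hε)
  set K := ⌈2*M/ε⌉₊ with hK
  have hgridev : ∀ᶠ n in atTop, ∀ i ∈ Finset.range (K+1),
      (μ (Set.Ioi (-M + i*ε))).toReal - ε/2 ≤ (ν n (Set.Ioi (-M + i*ε))).toReal :=
    (Finset.eventually_all _).mpr fun i _ =>
      ev_meas ν hp hν isOpen_Ioi (half_pos hε)
  filter_upwards [hgridev] with n hn t
  rcases le_or_gt M t with hc1 | hc1
  · have h1 : (μ (Set.Ioi t)).toReal ≤ ε/2 :=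
      le_trans (ENNReal.toReal_mono (measure_ne_top _ _)
        (measure_mono (fun x hx => le_trans hc1 (le_of_lt hx)))) hMa
    have h2 := ENNReal.toReal_nonneg (a := ν n (Set.Ioi t))
    linarith
  · have hsplit : ∀ a : ℝ, t ≤ a →
        (μ (Set.Ioi t)).toReal ≤ (μ (Set.Ioi a)).toReal + (μ (Set.Ioc t a)).toReal := by
      intro a hta
      rw [← ENNReal.toReal_add (measure_ne_top _ _) (measure_ne_top _ _)]
      apply ENNReal.toReal_mono (by finiteness)
      refine le_trans (measure_mono ?_) (measure_union_le _ _)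
      intro x hx
      rcases le_or_gt x a with h | h
      · exact Or.inr ⟨hx, h⟩
      · exact Or.inl h
    rcases lt_or_ge t (-M) with hc2 | hc2
    · have h0 : (0:ℕ) ∈ Finset.range (K+1) := by simp
      have hg := hn 0 h0
      simp only [Nat.cast_zero, zero_mul, add_zero] at hg
      have hmono : (ν n (Set.Ioi (-M))).toReal ≤ (ν n (Set.Ioi t)).toReal :=
        ENNReal.toReal_mono (hne n _) (measure_mono (Set.Ioi_subset_Ioi hc2.le))
      have hsp := hsplit (-M) hc2.le
      have htail : (μ (Set.Ioc t (-M))).toReal ≤ ε/2 :=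
        le_trans (ENNReal.toReal_mono (measure_ne_top _ _)
          (measure_mono (fun x hx => hx.2))) hMb
      linarith
    · set i := ⌈(t+M)/ε⌉₊ with hi
      have hiK : i ∈ Finset.range (K+1) := by
        simp only [Finset.mem_range, Nat.lt_succ_iff, hK]
        exact Nat.ceil_le_ceil (by gcongr; linarith)
      set a := -M + i*ε with ha
      have hta : t ≤ a := by
        have h := Nat.le_ceil ((t+M)/ε)
        rw [div_le_iff₀ hε] at h
        rw [ha]; linarith
      have hat : a ≤ t + ε := by
        have h : (i:ℝ) < (t+M)/ε + 1 :=
          Nat.ceil_lt_add_one (div_nonneg (by linarith) hε.le)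
        have h2 : (i:ℝ)*ε < t+M+ε := by
          calc (i:ℝ)*ε < ((t+M)/ε + 1)*ε := by nlinarith
          _ = t+M+ε := by field_simp
        rw [ha]; linarith
      have hg := hn i hiK
      have hmono : (ν n (Set.Ioi a)).toReal ≤ (ν n (Set.Ioi t)).toReal :=
        ENNReal.toReal_mono (hne n _) (measure_mono (Set.Ioi_subset_Ioi hta))
      have hsp := hsplit a hta
      have hIcc : (μ (Set.Ioc t a)).toReal ≤ ε/2 := by
        refine le_trans (ENNReal.toReal_mono (measure_ne_top _ _)
          (measure_mono Set.Ioc_subset_Icc_self)) ?_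
        refine le_trans (gaussian_Icc_le hta) (by linarith)
      linarith

private lemma unif_Iio (ν : ℕ → Measure ℝ) (hp : ∀ n, IsProbabilityMeasure (ν n))
    (hν : Tendsto (β := ProbabilityMeasure ℝ) (fun n => (⟨ν n, hp n⟩ : ProbabilityMeasure ℝ)) atTop
      (nhds (⟨gaussianReal 0 1, inferInstance⟩ : ProbabilityMeasure ℝ)))
    {ε : ℝ} (hε : 0 < ε) :
    ∀ᶠ n in atTop, ∀ t : ℝ,
      ((gaussianReal 0 1) (Set.Iio t)).toReal - ε ≤ (ν n (Set.Iio t)).toReal := by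
  set μ : Measure ℝ := gaussianReal 0 1 with hμ
  have hne : ∀ n (s : Set ℝ), ν n s ≠ ⊤ := fun n s => by
    haveI := hp n; exact measure_ne_top _ _
  obtain ⟨M, hM0, hMa, hMb⟩ := gaussian_tail (half_pos hε)
  set K := ⌈2*M/ε⌉₊ with hK
  have hgridev : ∀ᶠ n in atTop, ∀ i ∈ Finset.range (K+1),
      (μ (Set.Iio (M - i*ε))).toReal - ε/2 ≤ (ν n (Set.Iio (M - i*ε))).toReal :=
    (Finset.eventually_all _).mpr fun i _ =>
      ev_meas ν hp hν isOpen_Iio (half_pos hε)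
  filter_upwards [hgridev] with n hn t
  rcases le_or_gt t (-M) with hc1 | hc1
  · have h1 : (μ (Set.Iio t)).toReal ≤ ε/2 :=
      le_trans (ENNReal.toReal_mono (measure_ne_top _ _)
        (measure_mono (fun x hx => le_trans (le_of_lt hx) hc1))) hMb
    have h2 := ENNReal.toReal_nonneg (a := ν n (Set.Iio t))
    linarith
  · have hsplit : ∀ b : ℝ, b ≤ t →
        (μ (Set.Iio t)).toReal ≤ (μ (Set.Iio b)).toReal + (μ (Set.Ico b t)).toReal := by
      intro b hbt
      rw [← ENNReal.toReal_add (measure_ne_top _ _) (measure_ne_top _ _)]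
      apply ENNReal.toReal_mono (by finiteness)
      refine le_trans (measure_mono ?_) (measure_union_le _ _)
      intro x hx
      rcases lt_or_ge x b with h | h
      · exact Or.inl h
      · exact Or.inr ⟨h, hx⟩
    rcases lt_or_ge M t with hc2 | hc2
    · have h0 : (0:ℕ) ∈ Finset.range (K+1) := by simp
      have hg := hn 0 h0
      simp only [Nat.cast_zero, zero_mul, sub_zero] at hg
      have hmono : (ν n (Set.Iio M)).toReal ≤ (ν n (Set.Iio t)).toReal :=
        ENNReal.toReal_mono (hne n _) (measure_mono (Set.Iio_subset_Iio hc2.le))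
      have hsp := hsplit M hc2.le
      have htail : (μ (Set.Ico M t)).toReal ≤ ε/2 :=
        le_trans (ENNReal.toReal_mono (measure_ne_top _ _)
          (measure_mono (fun x hx => hx.1))) hMa
      linarith
    · set i := ⌈(M-t)/ε⌉₊ with hi
      have hiK : i ∈ Finset.range (K+1) := by
        simp only [Finset.mem_range, Nat.lt_succ_iff, hK]
        exact Nat.ceil_le_ceil (by gcongr; linarith)
      set b := M - i*ε with hb
      have hbt : b ≤ t := by
        have h := Nat.le_ceil ((M-t)/ε)
        rw [div_le_iff₀ hε] at h
        rw [hb]; linarith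
      have hbt2 : t - ε ≤ b := by
        have h : (i:ℝ) < (M-t)/ε + 1 :=
          Nat.ceil_lt_add_one (div_nonneg (by linarith) hε.le)
        have h2 : (i:ℝ)*ε < M-t+ε := by
          calc (i:ℝ)*ε < ((M-t)/ε + 1)*ε := by nlinarith
          _ = M-t+ε := by field_simp
        rw [hb]; linarith
      have hg := hn i hiK
      have hmono : (ν n (Set.Iio b)).toReal ≤ (ν n (Set.Iio t)).toReal :=
        ENNReal.toReal_mono (hne n _) (measure_mono (Set.Iio_subset_Iio hbt))
      have hsp := hsplit b hbt
      have hIcc : (μ (Set.Ico b t)).toReal ≤ ε/2 := by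
        refine le_trans (ENNReal.toReal_mono (measure_ne_top _ _)
          (measure_mono Set.Ico_subset_Icc_self)) ?_
        refine le_trans (gaussian_Icc_le hbt) (by linarith)
      linarith

end Helpers

/-- Lemma 1 of the paper: if the test statistic under `H₀` is `S⁰ₙ + V⁰ₙ` and under `H₁`
is `S¹ₙ + V¹ₙ`, where `V⁰ₙ → 0` and `V¹ₙ → 0` in probability and `S⁰ₙ, S¹ₙ` converge in
distribution (weak convergence of laws) to a standard normal, then for every `ε > 0` there
is `n₀` such that for all `n ≥ n₀` and every threshold `τ`, the average of the false alarm
and missed detection probabilities is at least `1/2 - ε`. -/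
theorem stmt_0
    (Ω0 Ω1 : ℕ → Type)
    [∀ n, MeasurableSpace (Ω0 n)] [∀ n, MeasurableSpace (Ω1 n)]
    (P0 : ∀ n, Measure (Ω0 n)) [∀ n, IsProbabilityMeasure (P0 n)]
    (P1 : ∀ n, Measure (Ω1 n)) [∀ n, IsProbabilityMeasure (P1 n)]
    (S0 V0 : ∀ n, Ω0 n → ℝ) (S1 V1 : ∀ n, Ω1 n → ℝ)
    (hS0m : ∀ n, Measurable (S0 n)) (hS1m : ∀ n, Measurable (S1 n))
    (hV0 : ∀ δ : ℝ, 0 < δ →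
      Tendsto (fun n => P0 n {ω | δ ≤ |V0 n ω|}) atTop (nhds 0))
    (hV1 : ∀ δ : ℝ, 0 < δ →
      Tendsto (fun n => P1 n {ω | δ ≤ |V1 n ω|}) atTop (nhds 0))
    (hS0 : Tendsto (β := ProbabilityMeasure ℝ)
      (fun n => (⟨(P0 n).map (S0 n), Measure.isProbabilityMeasure_map (hS0m n).aemeasurable⟩ :
        ProbabilityMeasure ℝ)) atTop
      (nhds (⟨gaussianReal 0 1, inferInstance⟩ : ProbabilityMeasure ℝ)))
    (hS1 : Tendsto (β := ProbabilityMeasure ℝ)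
      (fun n => (⟨(P1 n).map (S1 n), Measure.isProbabilityMeasure_map (hS1m n).aemeasurable⟩ :
        ProbabilityMeasure ℝ)) atTop
      (nhds (⟨gaussianReal 0 1, inferInstance⟩ : ProbabilityMeasure ℝ))) :
    ∀ ε : ℝ, 0 < ε → ∃ n₀ : ℕ, ∀ n ≥ n₀, ∀ τ : ℝ,
      ((P0 n {ω | S0 n ω + V0 n ω > τ}).toReal
          + (P1 n {ω | S1 n ω + V1 n ω ≤ τ}).toReal) / 2
        ≥ 1 / 2 - ε := by
  intro ε hε
  set μ : Measure ℝ := gaussianReal 0 1 with hμ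
  set δ : ℝ := ε/2 with hδ
  have hδ0 : 0 < δ := by positivity
  have hU0 := unif_Ioi _ (fun n => Measure.isProbabilityMeasure_map (hS0m n).aemeasurable)
    hS0 (half_pos hε)
  have hU1 := unif_Iio _ (fun n => Measure.isProbabilityMeasure_map (hS1m n).aemeasurable)
    hS1 (half_pos hε)
  have hv0 : ∀ᶠ n in atTop, P0 n {ω | δ ≤ |V0 n ω|} < ENNReal.ofReal (ε/4) :=
    (hV0 δ hδ0).eventually_lt_const (ENNReal.ofReal_pos.mpr (by positivity))
  have hv1 : ∀ᶠ n in atTop, P1 n {ω | δ ≤ |V1 n ω|} < ENNReal.ofReal (ε/4) :=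
    (hV1 δ hδ0).eventually_lt_const (ENNReal.ofReal_pos.mpr (by positivity))
  obtain ⟨n₀, hn₀⟩ := eventually_atTop.mp (((hU0.and hU1).and (hv0.and hv1)))
  refine ⟨n₀, fun n hn τ => ?_⟩
  obtain ⟨⟨hU0n, hU1n⟩, hv0n, hv1n⟩ := hn₀ n hn
  -- side 0
  have key0 : (μ (Set.Ioi (τ+δ))).toReal - ε/2
      ≤ (((P0 n).map (S0 n)) (Set.Ioi (τ+δ))).toReal := hU0n (τ+δ)
  rw [Measure.map_apply (hS0m n) measurableSet_Ioi] at key0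
  have hsub0 : S0 n ⁻¹' Set.Ioi (τ+δ)
      ⊆ {ω | S0 n ω + V0 n ω > τ} ∪ {ω | δ ≤ |V0 n ω|} := by
    intro ω hω
    simp only [Set.mem_preimage, Set.mem_Ioi] at hω
    by_cases h : δ ≤ |V0 n ω|
    · exact Or.inr h
    · left
      push_neg at h
      have h2 : -δ < V0 n ω := lt_of_lt_of_le (neg_lt_neg h) (neg_abs_le _)
      simp only [Set.mem_setOf_eq]
      linarith
  have hb0 : (P0 n (S0 n ⁻¹' Set.Ioi (τ+δ))).toReal
      ≤ (P0 n {ω | S0 n ω + V0 n ω > τ}).toReal + (P0 n {ω | δ ≤ |V0 n ω|}).toReal := by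
    rw [← ENNReal.toReal_add (measure_ne_top _ _) (measure_ne_top _ _)]
    exact ENNReal.toReal_mono (by finiteness)
      (le_trans (measure_mono hsub0) (measure_union_le _ _))
  have hv0' : (P0 n {ω | δ ≤ |V0 n ω|}).toReal ≤ ε/4 :=
    ENNReal.toReal_le_of_le_ofReal (by positivity) hv0n.le
  -- side 1
  have key1 : (μ (Set.Iio (τ-δ))).toReal - ε/2
      ≤ (((P1 n).map (S1 n)) (Set.Iio (τ-δ))).toReal := hU1n (τ-δ)
  rw [Measure.map_apply (hS1m n) measurableSet_Iio] at key1
  have hsub1 : S1 n ⁻¹' Set.Iio (τ-δ)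
      ⊆ {ω | S1 n ω + V1 n ω ≤ τ} ∪ {ω | δ ≤ |V1 n ω|} := by
    intro ω hω
    simp only [Set.mem_preimage, Set.mem_Iio] at hω
    by_cases h : δ ≤ |V1 n ω|
    · exact Or.inr h
    · left
      push_neg at h
      have h2 : V1 n ω < δ := lt_of_le_of_lt (le_abs_self _) h
      simp only [Set.mem_setOf_eq]
      linarith
  have hb1 : (P1 n (S1 n ⁻¹' Set.Iio (τ-δ))).toReal
      ≤ (P1 n {ω | S1 n ω + V1 n ω ≤ τ}).toReal + (P1 n {ω | δ ≤ |V1 n ω|}).toReal := by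
    rw [← ENNReal.toReal_add (measure_ne_top _ _) (measure_ne_top _ _)]
    exact ENNReal.toReal_mono (by finiteness)
      (le_trans (measure_mono hsub1) (measure_union_le _ _))
  have hv1' : (P1 n {ω | δ ≤ |V1 n ω|}).toReal ≤ ε/4 :=
    ENNReal.toReal_le_of_le_ofReal (by positivity) hv1n.le
  -- gaussian total mass
  have htot : 1 ≤ (μ (Set.Ioi (τ+δ))).toReal + (μ (Set.Iio (τ-δ))).toReal + δ := by
    have h1 : μ Set.univ
        ≤ μ (Set.Iio (τ-δ)) + (μ (Set.Icc (τ-δ) (τ+δ)) + μ (Set.Ioi (τ+δ))) := by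
      refine le_trans (measure_mono ?_)
        (le_trans (measure_union_le _ _) (add_le_add_right (measure_union_le _ _) _))
      intro x _
      rcases lt_or_ge x (τ-δ) with h | h
      · exact Or.inl h
      · rcases le_or_gt x (τ+δ) with h2 | h2
        · exact Or.inr (Or.inl ⟨h, h2⟩)
        · exact Or.inr (Or.inr h2)
    have h2 : (μ Set.univ).toReal = 1 := by
      rw [hμ]; simp
    have h3 : (μ (Set.Icc (τ-δ) (τ+δ))).toReal ≤ δ := by
      calc (μ (Set.Icc (τ-δ) (τ+δ))).toReal ≤ ((τ+δ) - (τ-δ))/2 :=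
            gaussian_Icc_le (by linarith)
        _ = δ := by ring
    have h4 := ENNReal.toReal_mono (by finiteness) h1
    rw [ENNReal.toReal_add (measure_ne_top _ _) (by finiteness),
      ENNReal.toReal_add (measure_ne_top _ _) (measure_ne_top _ _)] at h4
    linarith
  have hpos0 := ENNReal.toReal_nonneg (a := P0 n {ω | S0 n ω + V0 n ω > τ})
  have hpos1 := ENNReal.toReal_nonneg (a := P1 n {ω | S1 n ω + V1 n ω ≤ τ})
  rw [ge_iff_le, sub_le_iff_le_add]
  linarith
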